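/- Let α, β ∈ ℝ with |α| ≥ 1 and |β| ≤ 2/|α|. For any quantum state and ±1-valued observables A₁, A₂ on Alice's side and B₁, B₂ on Bob's side, the expectation value of I_α^β = β⟨A₁⟩ + α⟨A₁B₁⟩ + α⟨A₁B₂⟩ + ⟨A₂B₁⟩ - ⟨A₂B₂⟩ is at most 2√((1+α²)(1+β²/4)). If instead |β| ≥ 2/|α|, the bound is |β| + 2|α|. -/

import Mathlib

open Matrix Kronecker ComplexOrder

namespace Stmt18Aux

section
variable {k : Type*} [Fintype k] [DecidableEq k]

lemma trace_psd_re_nonneg (N : Matrix k k ℂ) (hN : N.PosSemidef) : 0 ≤ (N.trace).re := by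
  have h : ∀ i, 0 ≤ N i i := fun i => by
    exact hN.diag_nonneg
  have h2 : 0 ≤ N.trace := Finset.sum_nonneg fun i _ => h i
  simpa using (Complex.le_def.mp h2).1

lemma trace_mul_psd_re_nonneg (N ρ : Matrix k k ℂ) (hN : N.PosSemidef) (hρ : ρ.PosSemidef) :
    0 ≤ ((N * ρ).trace).re := by
  obtain ⟨B, rfl⟩ : ∃ B : Matrix k k ℂ, ρ = Bᴴ * B := by
    open scoped MatrixOrder in exact CStarAlgebra.nonneg_iff_eq_star_mul_self.mp hρ.nonneg
  have h1 : (N * (Bᴴ * B)).trace = (B * N * Bᴴ).trace := by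
    rw [← Matrix.mul_assoc, Matrix.trace_mul_comm, ← Matrix.mul_assoc]
  rw [h1]
  exact trace_psd_re_nonneg _ (hN.mul_mul_conjTranspose_same B)

lemma sq_trace_psd_re_nonneg (Q ρ : Matrix k k ℂ) (hQ : Qᴴ = Q) (hρ : ρ.PosSemidef) :
    0 ≤ ((Q * Q * ρ).trace).re := by
  have h2 : (Q * Q) = Qᴴ * Q := by rw [hQ]
  rw [h2]
  exact trace_mul_psd_re_nonneg _ _ (Matrix.posSemidef_conjTranspose_mul_self Q) hρ

lemma cs_bound (M ρ : Matrix k k ℂ) (hM : Mᴴ = M) (hρ : ρ.PosSemidef) (htr : ρ.trace = 1) :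
    (((M * ρ).trace).re)^2 ≤ ((M * M * ρ).trace).re := by
  set t : ℝ := ((M * ρ).trace).re with ht
  have hX : (M - (t:ℂ) • 1)ᴴ = M - (t:ℂ) • 1 := by
    simp [Matrix.conjTranspose_sub, hM, Matrix.conjTranspose_smul, Complex.star_def,
      Complex.conj_ofReal]
  have h0 := sq_trace_psd_re_nonneg _ ρ hX hρ
  have hexp : (M - (t:ℂ) • 1) * (M - (t:ℂ) • 1) * ρ
      = M * M * ρ - (t:ℂ) • (M * ρ) - (t:ℂ) • (M * ρ) + (t^2 : ℂ) • ρ := by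
    simp only [Matrix.sub_mul, Matrix.mul_sub, Matrix.smul_mul, Matrix.mul_smul,
      Matrix.one_mul, Matrix.mul_one, smul_smul]
    module
  rw [hexp] at h0
  simp only [Matrix.trace_add, Matrix.trace_sub, Matrix.trace_smul, htr, smul_eq_mul,
    mul_one, Complex.add_re, Complex.sub_re, Complex.mul_re, Complex.ofReal_re,
    Complex.ofReal_im, ← Complex.ofReal_pow, Complex.ofReal_re] at h0
  nlinarith [h0]

/-- Regime-agnostic master lemma: bound via sqrt of K whenever the squared operator
satisfies `2α²·M² + (α²-1)Q2² + (α²+1)Q3² = 2α²K•1`. -/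
lemma core1 (a1 a2 b1 b2 ρ : Matrix k k ℂ)
    (hρ : ρ.PosSemidef) (htr : ρ.trace = 1)
    (ha1h : a1ᴴ = a1) (ha2h : a2ᴴ = a2) (hb1h : b1ᴴ = b1) (hb2h : b2ᴴ = b2)
    (ha1 : a1*a1 = 1) (ha2 : a2*a2 = 1) (hb1 : b1*b1 = 1) (hb2 : b2*b2 = 1)
    (h11 : b1*a1 = a1*b1) (h12 : b2*a1 = a1*b2) (h21 : b1*a2 = a2*b1) (h22 : b2*a2 = a2*b2)
    (α β : ℝ) (hα : 1 ≤ |α|) :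
    ((((β:ℂ)•a1 + (α:ℂ)•(a1*b1) + (α:ℂ)•(a1*b2) + a2*b1 - a2*b2) * ρ).trace).re
      ≤ Real.sqrt ((1+α^2)*(4+β^2)) := by
  set M : Matrix k k ℂ := (β:ℂ)•a1 + (α:ℂ)•(a1*b1) + (α:ℂ)•(a1*b2) + a2*b1 - a2*b2 with hM
  set Q2 : Matrix k k ℂ := ((α*β:ℝ):ℂ)•a1 - a1*b1 - a1*b2 + (α:ℂ)•(a2*b1) - (α:ℂ)•(a2*b2)
    with hQ2
  set Q3 : Matrix k k ℂ := ((α*β:ℝ):ℂ)•a2 - (α:ℂ)•(a1*b1) + (α:ℂ)•(a1*b2) - a2*b1 - a2*b2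
    with hQ3
  have hconj : ∀ (x y : Matrix k k ℂ), xᴴ = x → yᴴ = y → x*y = y*x → (x*y)ᴴ = x*y := by
    intro x y hx hy hxy
    rw [Matrix.conjTranspose_mul, hx, hy, hxy]
  have hMh : Mᴴ = M := by
    rw [hM]
    simp only [Matrix.conjTranspose_add, Matrix.conjTranspose_sub, Matrix.conjTranspose_smul,
      Complex.star_def, Complex.conj_ofReal,
      hconj _ _ ha1h hb1h h11.symm, hconj _ _ ha1h hb2h h12.symm,
      hconj _ _ ha2h hb1h h21.symm, hconj _ _ ha2h hb2h h22.symm, ha1h]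
  have hQ2h : Q2ᴴ = Q2 := by
    rw [hQ2]
    simp only [Matrix.conjTranspose_add, Matrix.conjTranspose_sub, Matrix.conjTranspose_smul,
      Complex.star_def, Complex.conj_ofReal,
      hconj _ _ ha1h hb1h h11.symm, hconj _ _ ha1h hb2h h12.symm,
      hconj _ _ ha2h hb1h h21.symm, hconj _ _ ha2h hb2h h22.symm, ha1h]
  have hQ3h : Q3ᴴ = Q3 := by
    rw [hQ3]
    simp only [Matrix.conjTranspose_add, Matrix.conjTranspose_sub, Matrix.conjTranspose_smul,
      Complex.star_def, Complex.conj_ofReal,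
      hconj _ _ ha1h hb1h h11.symm, hconj _ _ ha1h hb2h h12.symm,
      hconj _ _ ha2h hb1h h21.symm, hconj _ _ ha2h hb2h h22.symm, ha2h]
  -- the SOS identity
  have ha1' : ∀ x : Matrix k k ℂ, a1 * (a1 * x) = x := fun x => by rw [← mul_assoc, ha1, one_mul]
  have ha2' : ∀ x : Matrix k k ℂ, a2 * (a2 * x) = x := fun x => by rw [← mul_assoc, ha2, one_mul]
  have hb1' : ∀ x : Matrix k k ℂ, b1 * (b1 * x) = x := fun x => by rw [← mul_assoc, hb1, one_mul]
  have hb2' : ∀ x : Matrix k k ℂ, b2 * (b2 * x) = x := fun x => by rw [← mul_assoc, hb2, one_mul]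
  have h11' : ∀ x : Matrix k k ℂ, b1 * (a1 * x) = a1 * (b1 * x) := fun x => by
    rw [← mul_assoc, h11, mul_assoc]
  have h12' : ∀ x : Matrix k k ℂ, b2 * (a1 * x) = a1 * (b2 * x) := fun x => by
    rw [← mul_assoc, h12, mul_assoc]
  have h21' : ∀ x : Matrix k k ℂ, b1 * (a2 * x) = a2 * (b1 * x) := fun x => by
    rw [← mul_assoc, h21, mul_assoc]
  have h22' : ∀ x : Matrix k k ℂ, b2 * (a2 * x) = a2 * (b2 * x) := fun x => by
    rw [← mul_assoc, h22, mul_assoc]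
  have hId : ((2*α^2:ℝ):ℂ) • (M * M) + ((α^2-1:ℝ):ℂ) • (Q2 * Q2) + ((α^2+1:ℝ):ℂ) • (Q3 * Q3)
      = ((2*α^2*(1+α^2)*(4+β^2):ℝ):ℂ) • 1 := by
    rw [hM, hQ2, hQ3]
    simp only [mul_add, add_mul, mul_sub, sub_mul, smul_mul_assoc, mul_smul_comm, smul_smul,
      mul_assoc, ha1, ha2, hb1, hb2, ha1', ha2', hb1', hb2', h11, h12, h21, h22,
      h11', h12', h21', h22', one_mul, mul_one]
    match_scalars <;> (push_cast; ring)
  -- take traces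
  have hIdρ := congrArg (fun X => ((X * ρ).trace).re) hId
  simp only [Matrix.add_mul, Matrix.smul_mul, Matrix.trace_add, Matrix.trace_smul,
    Matrix.one_mul, htr, smul_eq_mul, mul_one, Complex.add_re, Complex.mul_re,
    Complex.ofReal_re, Complex.ofReal_im, Complex.one_re, Complex.one_im] at hIdρ
  have hT2 := sq_trace_psd_re_nonneg Q2 ρ hQ2h hρ
  have hT3 := sq_trace_psd_re_nonneg Q3 ρ hQ3h hρ
  have hα2 : 1 ≤ α^2 := by nlinarith [sq_abs α, abs_nonneg α]
  have hMMle : ((M * M * ρ).trace).re ≤ (1+α^2)*(4+β^2) := by nlinarith [hIdρ, hT2, hT3]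
  have hcs := cs_bound M ρ hMh hρ htr
  have h1 : (((M * ρ).trace).re)^2 ≤ (1+α^2)*(4+β^2) := le_trans hcs hMMle
  calc ((M * ρ).trace).re ≤ |((M * ρ).trace).re| := le_abs_self _
    _ = Real.sqrt ((((M * ρ).trace).re)^2) := (Real.sqrt_sq_eq_abs _).symm
    _ ≤ Real.sqrt ((1+α^2)*(4+β^2)) := Real.sqrt_le_sqrt h1
set_option maxHeartbeats 2000000 in
lemma core2 (a1 a2 b1 b2 ρ : Matrix k k ℂ)
    (hρ : ρ.PosSemidef) (htr : ρ.trace = 1)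
    (ha1h : a1ᴴ = a1) (ha2h : a2ᴴ = a2) (hb1h : b1ᴴ = b1) (hb2h : b2ᴴ = b2)
    (ha1 : a1*a1 = 1) (ha2 : a2*a2 = 1) (hb1 : b1*b1 = 1) (hb2 : b2*b2 = 1)
    (h11 : b1*a1 = a1*b1) (h12 : b2*a1 = a1*b2) (h21 : b1*a2 = a2*b1) (h22 : b2*a2 = a2*b2)
    (α β : ℝ) (hα : 1 ≤ α) (hβ : 0 < β) (hαβ : 2 ≤ α*β) :
    ((((β:ℂ)•a1 + (α:ℂ)•(a1*b1) + (α:ℂ)•(a1*b2) + a2*b1 - a2*b2) * ρ).trace).re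
      ≤ β + 2*α := by
  -- scalar setup
  set c : ℝ := β + 2*α with hcdef
  set w : ℝ := |2*α - β| with hwdef
  set u : ℝ := w + c with hudef
  clear_value c w u
  have hc : 0 < c := by rw [hcdef]; positivity
  have hw : 0 ≤ w := hwdef ▸ abs_nonneg _
  have hu : 0 < u := by rw [hudef]; positivity
  have hαβ0 : 0 < α*β := by positivity
  have hcne : c ≠ 0 := ne_of_gt hc
  have hune : u ≠ 0 := ne_of_gt hu
  have habne : α*β ≠ 0 := ne_of_gt hαβ0
  have hα2 : 0 ≤ α^2 - 1 := by nlinarith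
  have key : w*u + c*u ≤ 4*(α*β)*(2*α^2+α*β-2) := by
    rcases le_or_gt β (2*α) with hcase | hcase
    · have hww : w = 2*α-β := by rw [hwdef]; exact abs_of_nonneg (by linarith)
      rw [hudef, hww, hcdef]
      nlinarith [mul_nonneg (mul_nonneg (by linarith : (0:ℝ) ≤ α) (by linarith : (0:ℝ) ≤ 2*α+β)) (by linarith : (0:ℝ) ≤ α*β-2)]
    · have hww : w = β-2*α := by
        rw [hwdef, abs_of_neg (by linarith : 2*α-β < 0)]; ring
      rw [hudef, hww, hcdef]
      nlinarith [mul_nonneg (mul_nonneg hβ.le hα2) (by linarith : (0:ℝ) ≤ 2*α+β)]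
  set r : ℝ := Real.sqrt (α*β/(4*u)) with hrdef
  have hr : 0 < r := Real.sqrt_pos.mpr (by positivity)
  have hrne : r ≠ 0 := ne_of_gt hr
  have hr2 : r^2 = α*β/(4*u) := Real.sq_sqrt (by positivity)
  set s : ℝ := -1/(8*r) with hsdef
  have hrs : r*s = -1/8 := by rw [hsdef]; field_simp
  have hs2 : s^2 = u/(16*(α*β)) := by
    rw [hsdef, div_pow, mul_pow, hr2]
    rw [div_eq_div_iff (by positivity) (by positivity)]
    field_simp
    ring
  set p : ℝ := Real.sqrt (α*β*w/(4*c*u)) with hpdef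
  have hp2 : p^2 = α*β*w/(4*c*u) := Real.sq_sqrt (by positivity)
  have hp0w : p = 0 → w = 0 := by
    intro h0
    by_contra hne
    have hwpos : 0 < w := lt_of_le_of_ne hw (Ne.symm hne)
    have hrad : 0 < α*β*w/(4*c*u) := by positivity
    rw [← hp2, h0] at hrad
    simp at hrad
  have hw2 : w^2 = (2*α-β)^2 := by rw [hwdef]; exact sq_abs _
  have hw2ab : w = 0 → 2*α - β = 0 := by
    intro h0
    have := abs_eq_zero.mp (hwdef ▸ h0)
    linarith
  set q : ℝ := (2*α-β)/(8*c*p) with hqdef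
  have hpq : p*q = (2*α-β)/(8*c) := by
    rcases eq_or_ne p 0 with hp0 | hp0
    · rw [hqdef, hp0, hw2ab (hp0w hp0)]; ring
    · rw [hqdef]; field_simp
  have hq2 : q^2 = w*u/(16*c*(α*β)) := by
    rcases eq_or_ne p 0 with hp0 | hp0
    · rw [hqdef, hw2ab (hp0w hp0), hp0w hp0]; simp
    · have h64 : q^2 = w^2/(64*c^2*p^2) := by
        rw [hqdef, div_pow, ← hw2]
        congr 1
        ring
      have hwne : w ≠ 0 := fun h => hp0 (by rw [hpdef, h]; simp)
      rw [h64, hp2]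
      rw [div_eq_div_iff (by positivity) (by positivity)]
      field_simp
      ring
  set δ : ℝ := (2*α^2+α*β-2)/(4*c) - w*u/(16*c*(α*β)) - u/(16*(α*β)) with hδdef
  clear_value r s p q δ
  have hδ : 0 ≤ δ := by
    have hpos : 0 < 16*c*(α*β) := by positivity
    have hδval : δ * (16*c*(α*β)) = 4*(α*β)*(2*α^2+α*β-2) - w*u - c*u := by
      rw [hδdef]; field_simp; ring
    have h2 : 0 ≤ δ * (16*c*(α*β)) := by rw [hδval]; linarith [key]
    exact (mul_nonneg_iff_of_pos_right hpos).mp h2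
  -- matrices
  set M : Matrix k k ℂ := (β:ℂ)•a1 + (α:ℂ)•(a1*b1) + (α:ℂ)•(a1*b2) + a2*b1 - a2*b2 with hM
  set X1 : Matrix k k ℂ := (2:ℂ)•a1 - a1*b1 - a1*b2 with hX1
  set X2 : Matrix k k ℂ := a2*b1 - a2*b2 with hX2
  set X3 : Matrix k k ℂ := (2:ℂ)•a2 - a2*b1 - a2*b2 with hX3
  set X4 : Matrix k k ℂ := a1*b1 - a1*b2 with hX4
  set Dm : Matrix k k ℂ := b1 - b2 with hDm
  set P2 : Matrix k k ℂ := (p:ℂ)•X1 + (q:ℂ)•X2 with hP2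
  set P3 : Matrix k k ℂ := (r:ℂ)•X3 + (s:ℂ)•X4 with hP3
  have hconj : ∀ (x y : Matrix k k ℂ), xᴴ = x → yᴴ = y → x*y = y*x → (x*y)ᴴ = x*y := by
    intro x y hx hy hxy
    rw [Matrix.conjTranspose_mul, hx, hy, hxy]
  have hMh : Mᴴ = M := by
    rw [hM]
    simp only [Matrix.conjTranspose_add, Matrix.conjTranspose_sub, Matrix.conjTranspose_smul,
      Complex.star_def, Complex.conj_ofReal,
      hconj _ _ ha1h hb1h h11.symm, hconj _ _ ha1h hb2h h12.symm,
      hconj _ _ ha2h hb1h h21.symm, hconj _ _ ha2h hb2h h22.symm, ha1h]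
  have hP2h : P2ᴴ = P2 := by
    rw [hP2, hX1, hX2]
    simp only [Matrix.conjTranspose_add, Matrix.conjTranspose_sub, Matrix.conjTranspose_smul,
      Complex.star_def, Complex.conj_ofReal, star_ofNat,
      hconj _ _ ha1h hb1h h11.symm, hconj _ _ ha1h hb2h h12.symm,
      hconj _ _ ha2h hb1h h21.symm, hconj _ _ ha2h hb2h h22.symm, ha1h, ha2h]
  have hP3h : P3ᴴ = P3 := by
    rw [hP3, hX3, hX4]
    simp only [Matrix.conjTranspose_add, Matrix.conjTranspose_sub, Matrix.conjTranspose_smul,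
      Complex.star_def, Complex.conj_ofReal, star_ofNat,
      hconj _ _ ha1h hb1h h11.symm, hconj _ _ ha1h hb2h h12.symm,
      hconj _ _ ha2h hb1h h21.symm, hconj _ _ ha2h hb2h h22.symm, ha1h, ha2h]
  have hDmh : Dmᴴ = Dm := by
    rw [hDm]
    simp only [Matrix.conjTranspose_sub, hb1h, hb2h]
  -- stage A : free-scalar expansion
  have hA : ((2*c:ℝ):ℂ)•(P2*P2) + ((2*c:ℝ):ℂ)•(P3*P3)
      = ((2*c*p^2:ℝ):ℂ)•(X1*X1) + ((2*c*(p*q):ℝ):ℂ)•(X1*X2 + X2*X1)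
      + ((2*c*q^2:ℝ):ℂ)•(X2*X2) + ((2*c*r^2:ℝ):ℂ)•(X3*X3)
      + ((2*c*(r*s):ℝ):ℂ)•(X3*X4 + X4*X3) + ((2*c*s^2:ℝ):ℂ)•(X4*X4) := by
    rw [hP2, hP3]
    simp only [mul_add, add_mul, smul_add, smul_smul, smul_mul_assoc, mul_smul_comm]
    match_scalars <;> (push_cast; ring)
  -- stage B : coefficient values
  have hk1 : (2*c*p^2:ℝ) = α*β*w/(2*u) := by rw [hp2]; field_simp; ring
  have hk2 : (2*c*(p*q):ℝ) = (2*α-β)/4 := by rw [hpq]; field_simp; ring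
  have hk3 : (2*c*q^2:ℝ) = w*u/(8*(α*β)) := by rw [hq2]; field_simp; ring
  have hk4 : (2*c*r^2:ℝ) = c*(α*β)/(2*u) := by rw [hr2]; field_simp; ring
  have hk5 : (2*c*(r*s):ℝ) = -c/4 := by rw [hrs]; ring
  have hk6 : (2*c*s^2:ℝ) = c*u/(8*(α*β)) := by rw [hs2]; field_simp; ring
  have hk7 : (2*c*δ:ℝ) = (2*α^2+α*β-2)/2 - w*u/(8*(α*β)) - c*u/(8*(α*β)) := by
    rw [hδdef]; field_simp; ring
  rw [hk1, hk2, hk3, hk4, hk5, hk6] at hA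
  -- stage C : rational identity
  have hB : M*M + (((α*β*w/(2*u):ℝ)):ℂ)•(X1*X1) + (((2*α-β)/4:ℝ):ℂ)•(X1*X2 + X2*X1)
      + ((w*u/(8*(α*β)):ℝ):ℂ)•(X2*X2) + ((c*(α*β)/(2*u):ℝ):ℂ)•(X3*X3)
      + ((-c/4:ℝ):ℂ)•(X3*X4 + X4*X3) + ((c*u/(8*(α*β)):ℝ):ℂ)•(X4*X4)
      + (((2*α^2+α*β-2)/2 - w*u/(8*(α*β)) - c*u/(8*(α*β)):ℝ):ℂ)•(Dm*Dm)
      = ((c^2:ℝ):ℂ)•1 := by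
    have ha1' : ∀ x : Matrix k k ℂ, a1 * (a1 * x) = x := fun x => by rw [← mul_assoc, ha1, one_mul]
    have ha2' : ∀ x : Matrix k k ℂ, a2 * (a2 * x) = x := fun x => by rw [← mul_assoc, ha2, one_mul]
    have hb1' : ∀ x : Matrix k k ℂ, b1 * (b1 * x) = x := fun x => by rw [← mul_assoc, hb1, one_mul]
    have hb2' : ∀ x : Matrix k k ℂ, b2 * (b2 * x) = x := fun x => by rw [← mul_assoc, hb2, one_mul]
    have h11' : ∀ x : Matrix k k ℂ, b1 * (a1 * x) = a1 * (b1 * x) := fun x => by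
      rw [← mul_assoc, h11, mul_assoc]
    have h12' : ∀ x : Matrix k k ℂ, b2 * (a1 * x) = a1 * (b2 * x) := fun x => by
      rw [← mul_assoc, h12, mul_assoc]
    have h21' : ∀ x : Matrix k k ℂ, b1 * (a2 * x) = a2 * (b1 * x) := fun x => by
      rw [← mul_assoc, h21, mul_assoc]
    have h22' : ∀ x : Matrix k k ℂ, b2 * (a2 * x) = a2 * (b2 * x) := fun x => by
      rw [← mul_assoc, h22, mul_assoc]
    have hαC : (α:ℂ) ≠ 0 := Complex.ofReal_ne_zero.mpr (by positivity)
    have hβC : (β:ℂ) ≠ 0 := Complex.ofReal_ne_zero.mpr (ne_of_gt hβ)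
    have hcC : (c:ℂ) ≠ 0 := Complex.ofReal_ne_zero.mpr hcne
    have huC : (u:ℂ) ≠ 0 := Complex.ofReal_ne_zero.mpr hune
    have hcC' : (c:ℂ) = (β:ℂ) + 2*(α:ℂ) := by exact_mod_cast congrArg Complex.ofReal hcdef
    have huC' : (u:ℂ) = (w:ℂ) + (β:ℂ) + 2*(α:ℂ) := by
      rw [hudef, hcdef]; push_cast; ring
    rw [hM, hX1, hX2, hX3, hX4, hDm]
    simp only [mul_add, add_mul, mul_sub, sub_mul, smul_mul_assoc, mul_smul_comm, smul_smul,
      smul_add, smul_sub, mul_assoc, ha1, ha2, hb1, hb2, ha1', ha2', hb1', hb2', h11, h12, h21,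
      h22, h11', h12', h21', h22', one_mul, mul_one]
    match_scalars <;>
    · push_cast
      simp only [huC', hcC']
      field_simp
      try ring
  -- combine
  have hId : M*M + (((2*c:ℝ):ℂ)•(P2*P2) + ((2*c:ℝ):ℂ)•(P3*P3)) + ((2*c*δ:ℝ):ℂ)•(Dm*Dm)
      = ((c^2:ℝ):ℂ)•1 := by
    rw [hA, hk7, ← hB]
    abel
  -- traces
  have hIdρ := congrArg (fun X => ((X * ρ).trace).re) hId
  simp only [Matrix.add_mul, Matrix.smul_mul, Matrix.trace_add, Matrix.trace_smul,
    Matrix.one_mul, htr, smul_eq_mul, mul_one, Complex.add_re, Complex.mul_re,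
    Complex.ofReal_re, Complex.ofReal_im, Complex.one_re, Complex.one_im] at hIdρ
  have hT2 := sq_trace_psd_re_nonneg P2 ρ hP2h hρ
  have hT3 := sq_trace_psd_re_nonneg P3 ρ hP3h hρ
  have hTD := sq_trace_psd_re_nonneg Dm ρ hDmh hρ
  have e2 : 0 ≤ 2*c*(((P2*P2) * ρ).trace).re := by
    have := mul_nonneg (by linarith : (0:ℝ) ≤ 2*c) hT2
    simpa [Matrix.mul_assoc] using this
  have e3 : 0 ≤ 2*c*(((P3*P3) * ρ).trace).re := by
    have := mul_nonneg (by linarith : (0:ℝ) ≤ 2*c) hT3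
    simpa [Matrix.mul_assoc] using this
  have eD : 0 ≤ 2*c*δ*(((Dm*Dm) * ρ).trace).re := by
    have := mul_nonneg (mul_nonneg (by linarith : (0:ℝ) ≤ 2*c) hδ) hTD
    simpa [Matrix.mul_assoc] using this
  have hMMle : (((M * M) * ρ).trace).re ≤ c^2 := by linarith [hIdρ, e2, e3, eD]
  have hcs := cs_bound M ρ hMh hρ htr
  have h1 : (((M * ρ).trace).re)^2 ≤ c^2 := by
    calc (((M * ρ).trace).re)^2 ≤ ((M * M * ρ).trace).re := hcs
      _ ≤ c^2 := by simpa [Matrix.mul_assoc] using hMMle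
  have h2 : ((M * ρ).trace).re ≤ c := by
    calc ((M * ρ).trace).re ≤ |((M * ρ).trace).re| := le_abs_self _
      _ = Real.sqrt ((((M * ρ).trace).re)^2) := (Real.sqrt_sq_eq_abs _).symm
      _ ≤ Real.sqrt (c^2) := Real.sqrt_le_sqrt h1
      _ = c := Real.sqrt_sq hc.le
  exact h2
end

lemma kron_conjT {m n : ℕ} (A : Matrix (Fin m) (Fin m) ℂ) (B : Matrix (Fin n) (Fin n) ℂ) :
    (A ⊗ₖ B)ᴴ = Aᴴ ⊗ₖ Bᴴ := by
  ext ⟨i,j⟩ ⟨k,l⟩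
  simp [Matrix.conjTranspose_apply, Matrix.kroneckerMap_apply, star_mul']

lemma kron_mul_kron {m n : ℕ} (A C : Matrix (Fin m) (Fin m) ℂ) (B D : Matrix (Fin n) (Fin n) ℂ) :
    (A ⊗ₖ B) * (C ⊗ₖ D) = (A*C) ⊗ₖ (B*D) := (Matrix.mul_kronecker_mul A C B D).symm

end Stmt18Aux

open Stmt18Aux

theorem stmt_18 {m n : ℕ} (α β : ℝ) (hα : 1 ≤ |α|)
    (ρ : Matrix (Fin m × Fin n) (Fin m × Fin n) ℂ)
    (hρ : ρ.PosSemidef) (htr : ρ.trace = 1)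
    (A1 A2 : Matrix (Fin m) (Fin m) ℂ) (B1 B2 : Matrix (Fin n) (Fin n) ℂ)
    (hA1 : A1.IsHermitian) (hA2 : A2.IsHermitian)
    (hB1 : B1.IsHermitian) (hB2 : B2.IsHermitian)
    (hA1sq : A1 * A1 = 1) (hA2sq : A2 * A2 = 1)
    (hB1sq : B1 * B1 = 1) (hB2sq : B2 * B2 = 1)
    (I : ℝ)
    (hI : I = β * ((A1 ⊗ₖ (1 : Matrix (Fin n) (Fin n) ℂ)) * ρ).trace.re
      + α * ((A1 ⊗ₖ B1) * ρ).trace.re + α * ((A1 ⊗ₖ B2) * ρ).trace.re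
      + ((A2 ⊗ₖ B1) * ρ).trace.re - ((A2 ⊗ₖ B2) * ρ).trace.re) :
    (|β| ≤ 2 / |α| → I ≤ 2 * Real.sqrt ((1 + α^2) * (1 + β^2/4))) ∧
    (2 / |α| ≤ |β| → I ≤ |β| + 2 * |α|) := by
  have hαne : α ≠ 0 := fun h => by rw [h] at hα; simp at hα; linarith
  set a1 : Matrix (Fin m × Fin n) (Fin m × Fin n) ℂ := A1 ⊗ₖ (1 : Matrix (Fin n) (Fin n) ℂ)
    with ha1def
  set a2 : Matrix (Fin m × Fin n) (Fin m × Fin n) ℂ := A2 ⊗ₖ (1 : Matrix (Fin n) (Fin n) ℂ)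
    with ha2def
  set b1 : Matrix (Fin m × Fin n) (Fin m × Fin n) ℂ := (1 : Matrix (Fin m) (Fin m) ℂ) ⊗ₖ B1
    with hb1def
  set b2 : Matrix (Fin m × Fin n) (Fin m × Fin n) ℂ := (1 : Matrix (Fin m) (Fin m) ℂ) ⊗ₖ B2
    with hb2def
  have ha1 : a1 * a1 = 1 := by
    rw [ha1def, kron_mul_kron, hA1sq, Matrix.one_mul, Matrix.one_kronecker_one]
  have ha2 : a2 * a2 = 1 := by
    rw [ha2def, kron_mul_kron, hA2sq, Matrix.one_mul, Matrix.one_kronecker_one]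
  have hb1sq : b1 * b1 = 1 := by
    rw [hb1def, kron_mul_kron, hB1sq, Matrix.one_mul, Matrix.one_kronecker_one]
  have hb2sq : b2 * b2 = 1 := by
    rw [hb2def, kron_mul_kron, hB2sq, Matrix.one_mul, Matrix.one_kronecker_one]
  have ha1h : a1ᴴ = a1 := by rw [ha1def, kron_conjT, hA1.eq, Matrix.conjTranspose_one]
  have ha2h : a2ᴴ = a2 := by rw [ha2def, kron_conjT, hA2.eq, Matrix.conjTranspose_one]
  have hb1h : b1ᴴ = b1 := by rw [hb1def, kron_conjT, hB1.eq, Matrix.conjTranspose_one]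
  have hb2h : b2ᴴ = b2 := by rw [hb2def, kron_conjT, hB2.eq, Matrix.conjTranspose_one]
  have h11 : b1 * a1 = a1 * b1 := by
    rw [ha1def, hb1def, kron_mul_kron, kron_mul_kron]
    rw [Matrix.one_mul, Matrix.one_mul, Matrix.mul_one, Matrix.mul_one]
  have h12 : b2 * a1 = a1 * b2 := by
    rw [ha1def, hb2def, kron_mul_kron, kron_mul_kron]
    rw [Matrix.one_mul, Matrix.one_mul, Matrix.mul_one, Matrix.mul_one]
  have h21 : b1 * a2 = a2 * b1 := by
    rw [ha2def, hb1def, kron_mul_kron, kron_mul_kron]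
    rw [Matrix.one_mul, Matrix.one_mul, Matrix.mul_one, Matrix.mul_one]
  have h22 : b2 * a2 = a2 * b2 := by
    rw [ha2def, hb2def, kron_mul_kron, kron_mul_kron]
    rw [Matrix.one_mul, Matrix.one_mul, Matrix.mul_one, Matrix.mul_one]
  have hm11 : A1 ⊗ₖ B1 = a1 * b1 := by
    rw [ha1def, hb1def, kron_mul_kron, Matrix.one_mul, Matrix.mul_one]
  have hm12 : A1 ⊗ₖ B2 = a1 * b2 := by
    rw [ha1def, hb2def, kron_mul_kron, Matrix.one_mul, Matrix.mul_one]
  have hm21 : A2 ⊗ₖ B1 = a2 * b1 := by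
    rw [ha2def, hb1def, kron_mul_kron, Matrix.one_mul, Matrix.mul_one]
  have hm22 : A2 ⊗ₖ B2 = a2 * b2 := by
    rw [ha2def, hb2def, kron_mul_kron, Matrix.one_mul, Matrix.mul_one]
  have hItr : I = ((((β:ℂ)•a1 + (α:ℂ)•(a1*b1) + (α:ℂ)•(a1*b2) + a2*b1 - a2*b2) * ρ).trace).re := by
    rw [hI, hm11, hm12, hm21, hm22]
    simp only [Matrix.add_mul, Matrix.sub_mul, Matrix.smul_mul, Matrix.trace_add,
      Matrix.trace_sub, Matrix.trace_smul, smul_eq_mul, Complex.add_re, Complex.sub_re,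
      Complex.mul_re, Complex.ofReal_re, Complex.ofReal_im]
    ring
  constructor
  · intro _
    have hb := core1 a1 a2 b1 b2 ρ hρ htr ha1h ha2h hb1h hb2h ha1 ha2 hb1sq hb2sq
      h11 h12 h21 h22 α β hα
    rw [← hItr] at hb
    have heq : 2 * Real.sqrt ((1 + α^2) * (1 + β^2/4)) = Real.sqrt ((1+α^2)*(4+β^2)) := by
      rw [show (1+α^2)*(4+β^2) = 2^2*((1+α^2)*(1+β^2/4)) by ring]
      rw [Real.sqrt_mul (by positivity : (0:ℝ) ≤ (2:ℝ)^2)]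
      rw [Real.sqrt_sq (by norm_num : (0:ℝ) ≤ (2:ℝ))]
    rw [heq]
    exact hb
  · intro h2
    have hβabs : 0 < |β| := lt_of_lt_of_le (by positivity : (0:ℝ) < 2 / |α|) h2
    have hαabs : 0 < |α| := by linarith
    have hαβabs : 2 ≤ |α| * |β| := by
      rw [div_le_iff₀ hαabs] at h2
      linarith [h2]
    rcases le_or_gt 0 α with hαp | hαn
    · have hαval : |α| = α := abs_of_nonneg hαp
      have hα1 : 1 ≤ α := by rw [hαval] at hα; exact hα
      rcases le_or_gt 0 β with hβp | hβn
      · -- α ≥ 1, β > 0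
        have hβval : |β| = β := abs_of_nonneg hβp
        have hb := core2 a1 a2 b1 b2 ρ hρ htr ha1h ha2h hb1h hb2h ha1 ha2 hb1sq hb2sq
          h11 h12 h21 h22 α β hα1 (by rw [hβval] at hβabs; exact hβabs)
          (by rw [hαval, hβval] at hαβabs; exact hαβabs)
        rw [← hItr] at hb
        rw [hαval, hβval]
        exact hb
      · -- α ≥ 1, β < 0 : use (-a1) (-a2) (-b1) (-b2), β' = -β
        have hβval : |β| = -β := abs_of_neg hβn
        have hb := core2 (-a1) (-a2) (-b1) (-b2) ρ hρ htr
          (by rw [Matrix.conjTranspose_neg, ha1h]) (by rw [Matrix.conjTranspose_neg, ha2h])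
          (by rw [Matrix.conjTranspose_neg, hb1h]) (by rw [Matrix.conjTranspose_neg, hb2h])
          (by rw [Matrix.neg_mul, Matrix.mul_neg, neg_neg, ha1])
          (by rw [Matrix.neg_mul, Matrix.mul_neg, neg_neg, ha2])
          (by rw [Matrix.neg_mul, Matrix.mul_neg, neg_neg, hb1sq])
          (by rw [Matrix.neg_mul, Matrix.mul_neg, neg_neg, hb2sq])
          (by rw [Matrix.neg_mul, Matrix.mul_neg, Matrix.neg_mul, Matrix.mul_neg, h11])
          (by rw [Matrix.neg_mul, Matrix.mul_neg, Matrix.neg_mul, Matrix.mul_neg, h12])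
          (by rw [Matrix.neg_mul, Matrix.mul_neg, Matrix.neg_mul, Matrix.mul_neg, h21])
          (by rw [Matrix.neg_mul, Matrix.mul_neg, Matrix.neg_mul, Matrix.mul_neg, h22])
          α (-β) hα1 (by linarith) (by rw [hαval, hβval] at hαβabs; linarith [hαβabs])
        have hMeq : ((-β:ℝ):ℂ)•(-a1) + (α:ℂ)•((-a1)*(-b1)) + (α:ℂ)•((-a1)*(-b2))
            + (-a2)*(-b1) - (-a2)*(-b2)
            = (β:ℂ)•a1 + (α:ℂ)•(a1*b1) + (α:ℂ)•(a1*b2) + a2*b1 - a2*b2 := by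
          push_cast
          simp only [Matrix.neg_mul, Matrix.mul_neg, neg_neg, neg_smul, smul_neg]
          try module
        rw [hMeq, ← hItr] at hb
        rw [hαval, hβval]
        linarith [hb]
    · have hαval : |α| = -α := abs_of_neg hαn
      have hα1 : 1 ≤ -α := by rw [hαval] at hα; exact hα
      rcases le_or_gt 0 β with hβp | hβn
      · -- α ≤ -1, β > 0 : use a1 (-a2) (-b1) (-b2), α' = -α
        have hβval : |β| = β := abs_of_nonneg hβp
        have hb := core2 a1 (-a2) (-b1) (-b2) ρ hρ htr
          ha1h (by rw [Matrix.conjTranspose_neg, ha2h])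
          (by rw [Matrix.conjTranspose_neg, hb1h]) (by rw [Matrix.conjTranspose_neg, hb2h])
          ha1
          (by rw [Matrix.neg_mul, Matrix.mul_neg, neg_neg, ha2])
          (by rw [Matrix.neg_mul, Matrix.mul_neg, neg_neg, hb1sq])
          (by rw [Matrix.neg_mul, Matrix.mul_neg, neg_neg, hb2sq])
          (by rw [Matrix.neg_mul, Matrix.mul_neg, h11])
          (by rw [Matrix.neg_mul, Matrix.mul_neg, h12])
          (by rw [Matrix.neg_mul, Matrix.mul_neg, Matrix.neg_mul, Matrix.mul_neg, h21])
          (by rw [Matrix.neg_mul, Matrix.mul_neg, Matrix.neg_mul, Matrix.mul_neg, h22])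
          (-α) β hα1 (by rw [hβval] at hβabs; exact hβabs)
          (by rw [hαval, hβval] at hαβabs; linarith [hαβabs])
        have hMeq : ((β:ℝ):ℂ)•a1 + ((-α:ℝ):ℂ)•(a1*(-b1)) + ((-α:ℝ):ℂ)•(a1*(-b2))
            + (-a2)*(-b1) - (-a2)*(-b2)
            = (β:ℂ)•a1 + (α:ℂ)•(a1*b1) + (α:ℂ)•(a1*b2) + a2*b1 - a2*b2 := by
          push_cast
          simp only [Matrix.neg_mul, Matrix.mul_neg, neg_neg, neg_smul, smul_neg]
          try module
        rw [hMeq, ← hItr] at hb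
        rw [hαval, hβval]
        linarith [hb]
      · -- α ≤ -1, β < 0 : use (-a1) a2 b1 b2, α' = -α, β' = -β
        have hβval : |β| = -β := abs_of_neg hβn
        have hb := core2 (-a1) a2 b1 b2 ρ hρ htr
          (by rw [Matrix.conjTranspose_neg, ha1h]) ha2h hb1h hb2h
          (by rw [Matrix.neg_mul, Matrix.mul_neg, neg_neg, ha1])
          ha2 hb1sq hb2sq
          (by rw [Matrix.mul_neg, Matrix.neg_mul, h11])
          (by rw [Matrix.mul_neg, Matrix.neg_mul, h12])
          h21 h22
          (-α) (-β) hα1 (by linarith)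
          (by rw [hαval, hβval] at hαβabs; linarith [hαβabs])
        have hMeq : ((-β:ℝ):ℂ)•(-a1) + ((-α:ℝ):ℂ)•((-a1)*b1) + ((-α:ℝ):ℂ)•((-a1)*b2)
            + a2*b1 - a2*b2
            = (β:ℂ)•a1 + (α:ℂ)•(a1*b1) + (α:ℂ)•(a1*b2) + a2*b1 - a2*b2 := by
          push_cast
          simp only [Matrix.neg_mul, Matrix.mul_neg, neg_neg, neg_smul, smul_neg]
          try module
        rw [hMeq, ← hItr] at hb
        rw [hαval, hβval]
        linarith [hb]
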